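/- Let ⟨P_α⟩_{α<λ} be a ⊑-increasing sequence of special perfect-tree forcing notions (P_α ⊑ P_β whenever α < β < λ). Then P = ⋃_{α<λ} P_α is a regular perfect-tree forcing notion, and for each γ < λ the set P_γ is pre-dense in P. -/

import Mathlib

noncomputable section

/-- Finite binary strings. -/
abbrev Str : Type := List Bool

/-- Points of Cantor space `2^ω`. -/
abbrev Pt : Type := ℕ → Bool

/-- The length-`n` initial segment of a point of Cantor space, as a string. -/
def seg (a : Pt) (n : ℕ) : Str := (List.range n).map a

/-- A tree: a set of strings closed under initial segments. -/
def IsTree (T : Set Str) : Prop := ∀ ⦃s t : Str⦄, s <+: t → t ∈ T → s ∈ T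

/-- A perfect tree: a nonempty tree in which every string has two
incomparable extensions inside the tree. -/
def IsPerfectTree (T : Set Str) : Prop :=
  T.Nonempty ∧ IsTree T ∧
    ∀ s ∈ T, ∃ t₁ t₂, t₁ ∈ T ∧ t₂ ∈ T ∧ s <+: t₁ ∧ s <+: t₂ ∧ ¬ t₁ <+: t₂ ∧ ¬ t₂ <+: t₁

/-- The restriction `T↾s = {t ∈ T : s ⊆ t or t ⊆ s}`. -/
def Tres (T : Set Str) (s : Str) : Set Str := {t ∈ T | s <+: t ∨ t <+: s}

/-- The set `[T]` of branches of a tree `T`. -/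
def branches (T : Set Str) : Set Pt := {a | ∀ n, seg a n ∈ T}

/-- `s` is the stem (root) of `T`: the longest `s ∈ T` with `T = T↾s`. -/
def IsStem (T : Set Str) (s : Str) : Prop :=
  s ∈ T ∧ T = Tres T s ∧ ∀ t ∈ T, T = Tres T t → t <+: s

open Classical in
/-- The stem `root(T)` of a tree (junk value `[]` if there is none). -/
def stem (T : Set Str) : Str := if h : ∃ s, IsStem T s then h.choose else []

/-- Simple splitting `T→i = T↾(root(T)⌢i)`. -/
def splitOne (T : Set Str) (i : Bool) : Set Str := Tres T (stem T ++ [i])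

/-- Iterated splitting `T→u`. -/
def splitIter (T : Set Str) (u : Str) : Set Str := u.foldl splitOne T

/-- Almost disjointness of trees: finite intersection. -/
def AD (S T : Set Str) : Prop := (S ∩ T).Finite

/-- A perfect-tree forcing notion: a nonempty set of perfect trees closed
under restrictions. -/
def IsPTF (P : Set (Set Str)) : Prop :=
  P.Nonempty ∧ (∀ T ∈ P, IsPerfectTree T) ∧ ∀ T ∈ P, ∀ s ∈ T, Tres T s ∈ P

/-- `A` is relatively clopen in `B` (as a subspace of Cantor space). -/
def ClopenIn (A B : Set Pt) : Prop := IsClopen ((fun x : B => (x : Pt)) ⁻¹' A)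

/-- `A` is relatively open in `B` (as a subspace of Cantor space). -/
def OpenIn (A B : Set Pt) : Prop := IsOpen ((fun x : B => (x : Pt)) ⁻¹' A)

/-- A special perfect-tree forcing notion: `P = {T↾s : s ∈ T ∈ A}` for an
antichain (pairwise a.d. set) `A ⊆ P`. -/
def SpecialPTF (P : Set (Set Str)) : Prop :=
  ∃ A ⊆ P, A.Pairwise AD ∧ P = {R | ∃ T ∈ A, ∃ s ∈ T, R = Tres T s}

/-- A regular perfect-tree forcing notion: `[S] ∩ [T]` is relatively clopen
in `[S]` or in `[T]`, for all `S, T ∈ P`. -/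
def RegularPTF (P : Set (Set Str)) : Prop :=
  ∀ S ∈ P, ∀ T ∈ P,
    ClopenIn (branches S ∩ branches T) (branches S) ∨
    ClopenIn (branches S ∩ branches T) (branches T)

/-- `T ⊆ᶠ ⋃ D`: `[T]` is covered by finitely many `[S]`, `S ∈ D`. -/
def SqFin (T : Set Str) (D : Set (Set Str)) : Prop :=
  ∃ D' ⊆ D, D'.Finite ∧ branches T ⊆ ⋃ S ∈ D', branches S

/-- `P ⊑ Q`: `Q` is a refinement of `P`. -/
def Refines (P Q : Set (Set Str)) : Prop :=
  (∀ T ∈ P, ∃ S ∈ Q, S ⊆ T) ∧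
  (∀ S ∈ Q, SqFin S P) ∧
  (∀ S ∈ Q, ∀ T ∈ P, ClopenIn (branches S ∩ branches T) (branches S) ∧ ¬ T ⊆ S)

/-- `D` is dense in `P`. -/
def DenseIn (D P : Set (Set Str)) : Prop := ∀ T ∈ P, ∃ S ∈ D, S ⊆ T

/-- `D` is pre-dense in `P`. -/
def PreDenseIn (D P : Set (Set Str)) : Prop :=
  DenseIn {T ∈ P | ∃ S ∈ D, T ⊆ S} P

/-- `P ⊑_D Q`: `Q` locks `D` over `P`. -/
def Locks (P D Q : Set (Set Str)) : Prop :=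
  Refines P Q ∧ ∀ S ∈ Q, SqFin S D

/-- A finite splitting system of height `n` over `P`. -/
def IsFSS (P : Set (Set Str)) (n : ℕ) (φ : Str → Set Str) : Prop :=
  (∀ s : Str, s.length ≤ n → φ s ∈ P) ∧
  ∀ (s : Str) (i : Bool), s.length < n → φ (s ++ [i]) ⊆ splitOne (φ s) i


section Aux

lemma seg_length (a : Pt) (n : ℕ) : (seg a n).length = n := by simp [seg]

lemma seg_prefix (a : Pt) {n m : ℕ} (h : n ≤ m) : seg a n <+: seg a m := by
  have : seg a n = (seg a m).take n := by
    simp [seg, ← List.map_take, List.take_range, Nat.min_eq_left h]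
  rw [this]; exact List.take_prefix _ _

lemma seg_getD (a : Pt) {n k : ℕ} (h : k < n) : (seg a n).getD k false = a k := by
  simp [seg, List.getD, h, List.getElem?_map]

lemma seg_injective (a : Pt) : Function.Injective (seg a) := by
  intro n m h
  have := congrArg List.length h
  simpa [seg_length] using this

lemma prefix_getD {p q : Str} (h : p <+: q) {k : ℕ} (hk : k < p.length) :
    p.getD k false = q.getD k false := by
  rw [List.getD_eq_getElem _ _ hk, List.getD_eq_getElem _ _ (hk.trans_le h.length_le)]
  exact h.getElem hk

lemma exists_branch {T : Set Str} (hT : IsPerfectTree T) {t : Str} (ht : t ∈ T) :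
    ∃ a, a ∈ branches T ∧ seg a t.length = t := by
  classical
  obtain ⟨-, htree, hsplit⟩ := hT
  have ext : ∀ u ∈ T, ∃ w, w ∈ T ∧ w.length = u.length + 1 ∧ u <+: w := by
    intro u hu
    obtain ⟨t₁, t₂, h₁, h₂, p₁, p₂, i₁, i₂⟩ := hsplit u hu
    have : t₁ ≠ u ∨ t₂ ≠ u := by
      rcases eq_or_ne t₁ u with rfl | h
      · exact Or.inr (fun h => i₂ (h ▸ p₂))
      · exact Or.inl h
    obtain ⟨w, hw, pw, hne⟩ : ∃ w, w ∈ T ∧ u <+: w ∧ w ≠ u := by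
      rcases this with h | h
      · exact ⟨t₁, h₁, p₁, h⟩
      · exact ⟨t₂, h₂, p₂, h⟩
    have hlt : u.length < w.length := by
      rcases lt_or_eq_of_le pw.length_le with h | h
      · exact h
      · exact absurd (pw.eq_of_length_le h.ge).symm hne
    refine ⟨w.take (u.length + 1), htree (List.take_prefix _ _) hw, ?_, ?_⟩
    · simp [List.length_take, Nat.min_eq_left hlt]
    · exact List.prefix_take_iff.2 ⟨pw, Nat.le_succ _⟩
  obtain ⟨F, hF⟩ : ∃ F : Str → Str, ∀ u ∈ T,
      F u ∈ T ∧ (F u).length = u.length + 1 ∧ u <+: F u := by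
    refine ⟨fun u => if h : u ∈ T then (ext u h).choose else [], fun u hu => ?_⟩
    simp only [dif_pos hu]
    exact (ext u hu).choose_spec
  set v : ℕ → Str := fun n => F^[n] t with hv
  have hvs : ∀ n, v (n+1) = F (v n) := fun n => Function.iterate_succ_apply' F n t
  have hvmem : ∀ n, v n ∈ T ∧ (v n).length = t.length + n := by
    intro n; induction n with
    | zero => exact ⟨ht, rfl⟩
    | succ n ih =>
      rw [hvs]
      exact ⟨(hF _ ih.1).1, by rw [(hF _ ih.1).2.1, ih.2]; ring⟩
  have hchain : ∀ n m, n ≤ m → v n <+: v m := by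
    intro n m h
    induction m with
    | zero => simp_all
    | succ m ih =>
      rcases Nat.le_succ_iff.1 h with h' | rfl
      · exact (ih h').trans (by rw [hvs]; exact (hF _ (hvmem m).1).2.2)
      · exact List.prefix_refl _
  set a : Pt := fun k => (v (k+1)).getD k false with ha
  have key : ∀ n k, k < (v n).length → (v n).getD k false = a k := by
    intro n k hk
    have hk1 : k < (v (k+1)).length := by rw [(hvmem (k+1)).2]; omega
    rcases le_total n (k+1) with h | h
    · exact (prefix_getD (hchain n (k+1) h) hk).trans rfl
    · exact ((prefix_getD (hchain (k+1) n h) hk1)).symm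
  have hseg : ∀ n, seg a n = (v n).take n := by
    intro n
    have hlen : n ≤ (v n).length := by rw [(hvmem n).2]; omega
    apply List.ext_getElem
    · simp [seg_length, List.length_take, Nat.min_eq_left hlen]
    · intro k h1 h2
      rw [← List.getD_eq_getElem _ false, ← List.getD_eq_getElem _ false]
      rw [seg_getD a (by simpa [seg_length] using h1)]
      rw [prefix_getD (List.take_prefix _ _) h2]
      exact (key n k (by have := seg_length a n ▸ h1; omega)).symm
  refine ⟨a, fun n => ?_, ?_⟩
  · rw [hseg n]; exact htree (List.take_prefix _ _) (hvmem n).1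
  · have hpre : v 0 <+: v t.length := hchain 0 _ (Nat.zero_le _)
    have h0 : t = (v t.length).take t.length := by
      simpa [hv] using List.prefix_iff_eq_take.1 hpre
    rw [hseg, ← h0]

lemma seg_eq_iff {a b : Pt} {n : ℕ} : seg b n = seg a n ↔ ∀ k < n, b k = a k := by
  constructor
  · intro h k hk
    rw [← seg_getD b hk, h, seg_getD a hk]
  · intro h
    apply List.ext_getElem (by simp [seg_length])
    intro k h1 h2
    simp only [seg, List.getElem_map, List.getElem_range]
    exact h k (by simpa [seg_length] using h1)

lemma isOpen_cyl (a : Pt) (n : ℕ) : IsOpen {b : Pt | seg b n = seg a n} := by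
  have : {b : Pt | seg b n = seg a n} = Set.pi ↑(Finset.range n) (fun k => {a k}) := by
    ext b
    simp [Set.mem_pi, seg_eq_iff]
  rw [this]
  exact isOpen_set_pi (Finset.range n).finite_toSet (fun k _ => isOpen_discrete _)

lemma isClosed_branches (R : Set Str) : IsClosed (branches R) := by
  have h1 : ∀ n, IsOpen {b : Pt | seg b n ∉ R} := by
    intro n
    have : {b : Pt | seg b n ∉ R} = ⋃ b ∈ {b : Pt | seg b n ∉ R}, {c | seg c n = seg b n} := by
      ext c
      constructor
      · intro hc; exact Set.mem_biUnion hc rfl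
      · rintro h
        simp only [Set.mem_iUnion, Set.mem_setOf_eq] at h
        obtain ⟨b, hb, he⟩ := h
        simpa [Set.mem_setOf_eq, he] using hb
    rw [this]
    exact isOpen_biUnion (fun b _ => isOpen_cyl b n)
  have : branches R = (⋃ n, {b : Pt | seg b n ∉ R})ᶜ := by
    ext b; simp [branches]
  rw [this]
  exact (isOpen_iUnion h1).isClosed_compl

lemma cylinder_nhds {a : Pt} {V : Set Pt} (h : V ∈ nhds a) :
    ∃ n, ∀ b : Pt, seg b n = seg a n → b ∈ V := by
  obtain ⟨W, hWV, hW, haW⟩ := mem_nhds_iff.1 h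
  obtain ⟨I, u, hu, hpi⟩ := isOpen_pi_iff.1 hW a haW
  refine ⟨(I.sup id) + 1, fun b hb => ?_⟩
  apply hWV; apply hpi
  intro k hk
  have hkn : k < I.sup id + 1 := Nat.lt_succ_of_le (Finset.le_sup (f := id) hk)
  rw [seg_eq_iff.1 hb k hkn]
  exact (hu k hk).2

lemma baire_step (T : Set Str) (hne : (branches T).Nonempty) (D : Set (Set Str)) (hD : D.Finite)
    (hcov : branches T ⊆ ⋃ S ∈ D, branches S) :
    ∃ S ∈ D, ∃ x : branches T, x ∈ interior ((fun x : branches T => (x : Pt)) ⁻¹' branches S) := by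
  haveI : CompactSpace ↥(branches T) :=
    isCompact_iff_compactSpace.1 (isClosed_branches T).isCompact
  haveI : Nonempty ↥(branches T) := hne.to_subtype
  haveI : BaireSpace ↥(branches T) := BaireSpace.of_t2Space_locallyCompactSpace
  haveI : Countable ↥hD.toFinset := Finite.to_countable
  have hc : ∀ S : hD.toFinset, IsClosed ((fun x : branches T => (x : Pt)) ⁻¹' branches (S : Set Str)) :=
    fun S => (isClosed_branches _).preimage continuous_subtype_val
  have hU : ⋃ S : hD.toFinset, ((fun x : branches T => (x : Pt)) ⁻¹' branches (S : Set Str)) = Set.univ := by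
    ext x
    simp only [Set.mem_iUnion, Set.mem_univ, iff_true, Set.mem_preimage]
    have := hcov x.2
    simp only [Set.mem_iUnion] at this
    obtain ⟨S, hS, hx⟩ := this
    exact ⟨⟨S, hD.mem_toFinset.2 hS⟩, hx⟩
  obtain ⟨S, hS⟩ := nonempty_interior_of_iUnion_of_closed hc hU
  exact ⟨S, hD.mem_toFinset.1 S.2, hS.imp (fun x hx => hx)⟩

lemma Tres_subset (T : Set Str) (s : Str) : Tres T s ⊆ T := fun _ h => h.1

lemma branches_mono {S T : Set Str} (h : S ⊆ T) : branches S ⊆ branches T :=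
  fun _ ha n => h (ha n)

lemma Tres_mono {T : Set Str} {s t : Str} (h : s <+: t) : Tres T t ⊆ Tres T s := by
  rintro u ⟨hu, hc⟩
  refine ⟨hu, ?_⟩
  rcases hc with hc | hc
  · exact Or.inl (h.trans hc)
  · rcases List.prefix_or_prefix_of_prefix hc h with h' | h'
    · exact Or.inr h'
    · exact Or.inl h'

lemma seg_of_branch_Tres {T : Set Str} {s : Str} {a : Pt}
    (h : a ∈ branches (Tres T s)) : seg a s.length = s := by
  obtain ⟨-, hc⟩ := h s.length
  rcases hc with hc | hc
  · exact (hc.eq_of_length (by rw [seg_length])).symm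
  · exact hc.eq_of_length (by rw [seg_length])

lemma comparable_of_common_branch {T T' : Set Str} {s t : Str} {a : Pt}
    (h1 : a ∈ branches (Tres T s)) (h2 : a ∈ branches (Tres T' t)) :
    s <+: t ∨ t <+: s := by
  have e1 := seg_of_branch_Tres h1
  have e2 := seg_of_branch_Tres h2
  rcases le_total s.length t.length with h | h
  · exact Or.inl (by rw [← e1, ← e2]; exact seg_prefix a h)
  · exact Or.inr (by rw [← e1, ← e2]; exact seg_prefix a h)

lemma branches_disjoint_of_finite {T₀ T₁ S T : Set Str} (h : (T₀ ∩ T₁).Finite)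
    (hS : S ⊆ T₀) (hT : T ⊆ T₁) : branches S ∩ branches T = ∅ := by
  ext a
  simp only [Set.mem_inter_iff, Set.mem_empty_iff_false, iff_false, not_and]
  intro ha hb
  have hsub : Set.range (seg a) ⊆ T₀ ∩ T₁ := by
    rintro _ ⟨n, rfl⟩
    exact ⟨hS (ha n), hT (hb n)⟩
  exact Set.infinite_range_of_injective (seg_injective a) (h.subset hsub)

lemma Tres_perfect {T : Set Str} (hT : IsPerfectTree T) {s : Str} (hs : s ∈ T) :
    IsPerfectTree (Tres T s) := by
  obtain ⟨-, htree, hsplit⟩ := hT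
  refine ⟨⟨s, hs, Or.inl (List.prefix_refl _)⟩, ?_, ?_⟩
  · rintro u' u hu' ⟨hu, hc⟩
    refine ⟨htree hu' hu, ?_⟩
    rcases hc with hc | hc
    · rcases List.prefix_or_prefix_of_prefix hu' hc with h' | h'
      · exact Or.inr h'
      · exact Or.inl h'
    · exact Or.inr (hu'.trans hc)
  · rintro u ⟨hu, hc⟩
    rcases hc with hc | hc
    · obtain ⟨t₁, t₂, h₁, h₂, p₁, p₂, i₁, i₂⟩ := hsplit u hu
      exact ⟨t₁, t₂, ⟨h₁, Or.inl (hc.trans p₁)⟩, ⟨h₂, Or.inl (hc.trans p₂)⟩, p₁, p₂, i₁, i₂⟩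
    · obtain ⟨t₁, t₂, h₁, h₂, p₁, p₂, i₁, i₂⟩ := hsplit s hs
      exact ⟨t₁, t₂, ⟨h₁, Or.inl p₁⟩, ⟨h₂, Or.inl p₂⟩, hc.trans p₁, hc.trans p₂, i₁, i₂⟩

lemma prefix_seg {a : Pt} {t : Str} {n : ℕ} (h : t <+: seg a n) : seg a t.length = t := by
  have hle : t.length ≤ n := by
    have := h.length_le; rwa [seg_length] at this
  have h2 : seg a t.length <+: seg a n := seg_prefix a hle
  rcases List.prefix_or_prefix_of_prefix h h2 with h' | h'
  · exact (h'.eq_of_length (by rw [seg_length])).symm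
  · exact h'.eq_of_length (by rw [seg_length])

lemma Tres_subset_of_branches_subset {T : Set Str} (hT : IsPerfectTree T) {s : Str}
    (hs : s ∈ T) {R : Set Str} (h : branches (Tres T s) ⊆ branches R) :
    Tres T s ⊆ R := by
  rintro t ⟨ht, hc⟩
  have hTs := Tres_perfect hT hs
  obtain ⟨u, hu, htu⟩ : ∃ u, u ∈ Tres T s ∧ t <+: u := by
    rcases hc with hc | hc
    · exact ⟨t, ⟨ht, Or.inl hc⟩, List.prefix_refl _⟩
    · exact ⟨s, ⟨hs, Or.inl (List.prefix_refl _)⟩, hc⟩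
  obtain ⟨a, ha, hseg⟩ := exists_branch hTs hu
  have hta : seg a t.length = t := prefix_seg (hseg ▸ htu)
  have := h ha t.length
  rwa [hta] at this

lemma clopenIn_of_eq_empty {A B : Set Pt} (h : A = ∅) : ClopenIn A B := by
  unfold ClopenIn
  rw [h]
  simpa using isClopen_empty

lemma clopenIn_of_subset {A B : Set Pt} (h : B ⊆ A) : ClopenIn A B := by
  unfold ClopenIn
  have : (fun x : B => (x : Pt)) ⁻¹' A = Set.univ := by
    ext x; simpa using h x.2
  rw [this]
  exact isClopen_univ

end Aux

/-- Lemma 3.2 (pqr) (4),(5): the union of a `⊑`-increasing sequence of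
special perfect-tree forcing notions is a regular perfect-tree forcing
notion, and each term is pre-dense in the union. -/
theorem stmt14 (l : Ordinal) (hl : 0 < l) (P : Ordinal → Set (Set Str))
    (hptf : ∀ a < l, IsPTF (P a)) (hsp : ∀ a < l, SpecialPTF (P a))
    (hinc : ∀ a b : Ordinal, a < b → b < l → Refines (P a) (P b)) :
    IsPTF (⋃ a ∈ Set.Iio l, P a) ∧ RegularPTF (⋃ a ∈ Set.Iio l, P a) ∧
    ∀ g < l, PreDenseIn (P g) (⋃ a ∈ Set.Iio l, P a) := by
  set U : Set (Set Str) := ⋃ a ∈ Set.Iio l, P a with hU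
  have memU : ∀ {T}, T ∈ U ↔ ∃ a, a < l ∧ T ∈ P a := by
    intro T
    simp [hU, Set.mem_iUnion, Set.mem_Iio]
  refine ⟨⟨?_, ?_, ?_⟩, ?_, ?_⟩
  · -- nonempty
    obtain ⟨T, hT⟩ := (hptf 0 hl).1
    exact ⟨T, memU.2 ⟨0, hl, hT⟩⟩
  · -- perfect
    intro T hT
    obtain ⟨a, ha, hTa⟩ := memU.1 hT
    exact (hptf a ha).2.1 T hTa
  · -- closed under restriction
    intro T hT s hs
    obtain ⟨a, ha, hTa⟩ := memU.1 hT
    exact memU.2 ⟨a, ha, (hptf a ha).2.2 T hTa s hs⟩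
  · -- regular
    intro S hS T hT
    obtain ⟨a, ha, hSa⟩ := memU.1 hS
    obtain ⟨b, hb, hTb⟩ := memU.1 hT
    rcases lt_trichotomy a b with h | rfl | h
    · right
      have := ((hinc a b h hb).2.2 T hTb S hSa).1
      rwa [Set.inter_comm (branches T) (branches S)] at this
    · -- same index: use specialness
      obtain ⟨A, hAP, hAD, hPa⟩ := hsp a ha
      have hSa' := hSa
      have hTa' := hTb
      rw [hPa] at hSa' hTa'
      obtain ⟨T₀, hT₀, s, hsT₀, rfl⟩ := hSa'
      obtain ⟨T₁, hT₁, t, htT₁, rfl⟩ := hTa'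
      rcases eq_or_ne T₀ T₁ with rfl | hne
      · by_cases hcomp : s <+: t ∨ t <+: s
        · rcases hcomp with hc | hc
          · right
            have hsub : branches (Tres T₀ t) ⊆ branches (Tres T₀ s) :=
              branches_mono (Tres_mono hc)
            apply clopenIn_of_subset
            exact fun x hx => ⟨hsub hx, hx⟩
          · left
            have hsub : branches (Tres T₀ s) ⊆ branches (Tres T₀ t) :=
              branches_mono (Tres_mono hc)
            apply clopenIn_of_subset
            exact fun x hx => ⟨hx, hsub hx⟩
        · left
          apply clopenIn_of_eq_empty
          ext x
          simp only [Set.mem_inter_iff, Set.mem_empty_iff_false, iff_false, not_and]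
          intro h1 h2
          exact hcomp (comparable_of_common_branch h1 h2)
      · left
        apply clopenIn_of_eq_empty
        exact branches_disjoint_of_finite (hAD hT₀ hT₁ hne)
          (Tres_subset T₀ s) (Tres_subset T₁ t)
    · left
      exact ((hinc b a h ha).2.2 S hSa T hTb).1
  · -- pre-density
    intro g hg T hT
    obtain ⟨a, ha, hTa⟩ := memU.1 hT
    rcases lt_trichotomy a g with h | rfl | h
    · obtain ⟨S, hSg, hST⟩ := (hinc a g h hg).1 T hTa
      exact ⟨S, ⟨memU.2 ⟨g, hg, hSg⟩, S, hSg, subset_rfl⟩, hST⟩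
    · exact ⟨T, ⟨hT, T, hTa, subset_rfl⟩, subset_rfl⟩
    · -- g < a : Baire argument
      obtain ⟨D', hD'g, hD'fin, hcov⟩ := (hinc g a h ha).2.1 T hTa
      have hTperf : IsPerfectTree T := (hptf a ha).2.1 T hTa
      have hTne : (branches T).Nonempty := by
        obtain ⟨t, ht⟩ := hTperf.1
        obtain ⟨x, hx, -⟩ := exists_branch hTperf ht
        exact ⟨x, hx⟩
      obtain ⟨S, hSD', x, hxint⟩ := baire_step T hTne D' hD'fin hcov
      have hnhds : ((fun x : branches T => (x : Pt)) ⁻¹' branches S) ∈ nhds x :=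
        mem_interior_iff_mem_nhds.1 hxint
      obtain ⟨V, hV, hVsub⟩ := (mem_nhds_subtype _ _ _).1 hnhds
      obtain ⟨n, hn⟩ := cylinder_nhds hV
      set s : Str := seg (x : Pt) n with hs
      have hsT : s ∈ T := x.2 n
      have hbrsub : branches (Tres T s) ⊆ branches S := by
        intro b hb
        have hbT : b ∈ branches T := branches_mono (Tres_subset T s) hb
        have hbseg : seg b n = seg (x : Pt) n := by
          have := seg_of_branch_Tres hb
          rwa [hs, seg_length] at this
        exact hVsub (Set.mem_preimage.2 (by exact hn b hbseg) : (⟨b, hbT⟩ : branches T) ∈ _)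
      have hTres : Tres T s ⊆ S := Tres_subset_of_branches_subset hTperf hsT hbrsub
      refine ⟨Tres T s, ⟨memU.2 ⟨a, ha, (hptf a ha).2.2 T hTa s hsT⟩, S, hD'g hSD', hTres⟩,
        Tres_subset T s⟩

end
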